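/- Let d ≥ 1, p ≥ 1, and let μ₁, μ₂ be Borel probability measures on ℝ^d with ∫ |x|^p dμ₁(x) < ∞ and ∫ |x|^p dμ₂(x) < ∞. Then every Borel probability measure μ on ℝ^d with μ₁ ≤_st μ ≤_st μ₂ satisfies ∫ |x|^p dμ(x) ≤ 2^p ( ∫ |x|^p dμ₁(x) + ∫ |x|^p dμ₂(x) ). In particular, the order interval {μ : μ₁ ≤_st μ ≤_st μ₂} is bounded in p-th moment. -/

import Mathlib

open MeasureTheory

/-- The Euclidean norm on `ℝ^d = Fin d → ℝ`. -/
noncomputable def eucNorm (d : ℕ) (x : Fin d → ℝ) : ℝ :=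
  Real.sqrt (∑ i, (x i) ^ 2)

/-- The stochastic order on Borel probability measures on `ℝ^d`. -/
def StochasticallyLE {d : ℕ} (μ ν : Measure (Fin d → ℝ)) : Prop :=
  ∀ f : (Fin d → ℝ) → ℝ, Measurable f → (∃ M : ℝ, ∀ x, |f x| ≤ M) → Monotone f →
    ∫ x, f x ∂μ ≤ ∫ x, f x ∂ν

lemma eucNorm_measurable (d : ℕ) : Measurable (eucNorm d) := by
  unfold eucNorm; fun_prop

lemma eucNorm_nonneg (d : ℕ) (x : Fin d → ℝ) : 0 ≤ eucNorm d x := Real.sqrt_nonneg _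

lemma eucNorm_eq_norm (d : ℕ) (y : Fin d → ℝ) :
    eucNorm d y = ‖(WithLp.equiv 2 (Fin d → ℝ)).symm y‖ := by
  rw [EuclideanSpace.norm_eq]; simp [eucNorm, Real.norm_eq_abs, sq_abs]

lemma eucNorm_split (d : ℕ) (x : Fin d → ℝ) :
    eucNorm d x ≤ eucNorm d (fun i => max (x i) 0) + eucNorm d (fun i => max (-x i) 0) := by
  rw [eucNorm_eq_norm, eucNorm_eq_norm, eucNorm_eq_norm]
  have : (WithLp.equiv 2 (Fin d → ℝ)).symm x
      = (WithLp.equiv 2 (Fin d → ℝ)).symm (fun i => max (x i) 0)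
        - (WithLp.equiv 2 (Fin d → ℝ)).symm (fun i => max (-x i) 0) := by
    apply (WithLp.equiv 2 (Fin d → ℝ)).injective
    ext i
    simp [max_def]
    split_ifs <;> linarith
  rw [this]
  exact norm_sub_le _ _

lemma two_pow_bound (a b p : ℝ) (ha : 0 ≤ a) (hb : 0 ≤ b) (hp : 1 ≤ p) :
    (a + b) ^ p ≤ 2 ^ p * (a ^ p + b ^ p) := by
  have h1 : a + b ≤ 2 * max a b := by
    rcases le_total a b with h | h <;> simp [max_def] <;> split_ifs <;> linarith
  have h2 : (a + b) ^ p ≤ (2 * max a b) ^ p :=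
    Real.rpow_le_rpow (by linarith) h1 (by linarith)
  have h3 : (2 * max a b) ^ p = 2 ^ p * (max a b) ^ p :=
    Real.mul_rpow (by norm_num) (le_max_of_le_left ha)
  have h4 : (max a b) ^ p ≤ a ^ p + b ^ p := by
    rcases le_total a b with h | h
    · rw [max_eq_right h]; nlinarith [Real.rpow_nonneg ha p]
    · rw [max_eq_left h]; nlinarith [Real.rpow_nonneg hb p]
  calc (a+b)^p ≤ 2^p * (max a b)^p := by rw [← h3]; exact h2
    _ ≤ 2^p * (a^p + b^p) := by
        have : (0:ℝ) ≤ 2^p := Real.rpow_nonneg (by norm_num) p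
        nlinarith

lemma eucNorm_part_le (d : ℕ) (x : Fin d → ℝ) (f : ℝ → ℝ) (hf : ∀ t, (f t)^2 ≤ t^2) :
    eucNorm d (fun i => f (x i)) ≤ eucNorm d x := by
  apply Real.sqrt_le_sqrt
  exact Finset.sum_le_sum fun i _ => hf (x i)

lemma key_lintegral_le {α : Type*} [MeasurableSpace α] (μ ν : Measure α)
    [IsProbabilityMeasure μ] [IsProbabilityMeasure ν]
    (g : α → ℝ) (hg : Measurable g) (hg0 : ∀ x, 0 ≤ g x)
    (hst : ∀ n : ℕ, ∫ x, min (g x) n ∂μ ≤ ∫ x, min (g x) n ∂ν) :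
    ∫⁻ x, ENNReal.ofReal (g x) ∂μ ≤ ∫⁻ x, ENNReal.ofReal (g x) ∂ν := by
  have hmeas : ∀ n : ℕ, Measurable (fun x => ENNReal.ofReal (min (g x) n)) := fun n =>
    (hg.min measurable_const).ennreal_ofReal
  have hmono : Monotone (fun (n : ℕ) (x : α) => ENNReal.ofReal (min (g x) n)) := by
    intro m n hmn x
    exact ENNReal.ofReal_le_ofReal (min_le_min le_rfl (by exact_mod_cast hmn))
  have hsup : ∀ x, (⨆ n : ℕ, ENNReal.ofReal (min (g x) n)) = ENNReal.ofReal (g x) := by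
    intro x
    apply le_antisymm
    · exact iSup_le fun n => ENNReal.ofReal_le_ofReal (min_le_left _ _)
    · calc ENNReal.ofReal (g x) = ENNReal.ofReal (min (g x) ⌈g x⌉₊) := by
            rw [min_eq_left (Nat.le_ceil _)]
        _ ≤ ⨆ n : ℕ, ENNReal.ofReal (min (g x) n) :=
            le_iSup (fun n : ℕ => ENNReal.ofReal (min (g x) n)) ⌈g x⌉₊
  have hint : ∀ (κ : Measure α) [IsProbabilityMeasure κ], ∀ n : ℕ,
      Integrable (fun x => min (g x) n) κ := by
    intro κ _ n
    refine Integrable.mono' (integrable_const (n:ℝ)) (hg.min measurable_const).aestronglyMeasurable ?_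
    filter_upwards with x
    rw [Real.norm_eq_abs, abs_of_nonneg (le_min (hg0 x) (Nat.cast_nonneg n))]
    exact min_le_right _ _
  have heq : ∀ (κ : Measure α) [IsProbabilityMeasure κ], ∀ n : ℕ,
      ∫⁻ x, ENNReal.ofReal (min (g x) n) ∂κ = ENNReal.ofReal (∫ x, min (g x) n ∂κ) := by
    intro κ _ n
    rw [ofReal_integral_eq_lintegral_ofReal (hint κ n)
      (Filter.Eventually.of_forall fun x => le_min (hg0 x) (Nat.cast_nonneg n))]
  calc ∫⁻ x, ENNReal.ofReal (g x) ∂μ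
      = ⨆ n : ℕ, ∫⁻ x, ENNReal.ofReal (min (g x) n) ∂μ := by
        rw [← lintegral_iSup hmeas hmono]
        simp_rw [hsup]
    _ ≤ ∫⁻ x, ENNReal.ofReal (g x) ∂ν := by
        apply iSup_le
        intro n
        rw [heq μ n]
        calc ENNReal.ofReal (∫ x, min (g x) n ∂μ)
            ≤ ENNReal.ofReal (∫ x, min (g x) n ∂ν) := ENNReal.ofReal_le_ofReal (hst n)
          _ = ∫⁻ x, ENNReal.ofReal (min (g x) n) ∂ν := (heq ν n).symm
          _ ≤ ∫⁻ x, ENNReal.ofReal (g x) ∂ν :=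
              lintegral_mono fun x => ENNReal.ofReal_le_ofReal (min_le_left _ _)

/-- An order interval of probability measures (w.r.t. the stochastic order) with endpoints
of finite `p`-th moment is bounded in `p`-th moment:
`∫ |x|^p dμ ≤ 2^p (∫ |x|^p dμ₁ + ∫ |x|^p dμ₂)` whenever `μ₁ ≤ₛₜ μ ≤ₛₜ μ₂`. -/
theorem order_interval_bounded_pth_moment
    (d : ℕ) (hd : 1 ≤ d) (p : ℝ) (hp : 1 ≤ p)
    (μ₁ μ₂ μ : Measure (Fin d → ℝ))
    [IsProbabilityMeasure μ₁] [IsProbabilityMeasure μ₂] [IsProbabilityMeasure μ]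
    (h₁ : ∫⁻ x, ENNReal.ofReal (eucNorm d x ^ p) ∂μ₁ < ⊤)
    (h₂ : ∫⁻ x, ENNReal.ofReal (eucNorm d x ^ p) ∂μ₂ < ⊤)
    (hle₁ : StochasticallyLE μ₁ μ) (hle₂ : StochasticallyLE μ μ₂) :
    ∫⁻ x, ENNReal.ofReal (eucNorm d x ^ p) ∂μ ≤
      ENNReal.ofReal ((2:ℝ) ^ p) *
        (∫⁻ x, ENNReal.ofReal (eucNorm d x ^ p) ∂μ₁ +
         ∫⁻ x, ENNReal.ofReal (eucNorm d x ^ p) ∂μ₂) := by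
  set gp : (Fin d → ℝ) → ℝ := fun x => (eucNorm d (fun i => max (x i) 0)) ^ p with hgp
  set gn : (Fin d → ℝ) → ℝ := fun x => (eucNorm d (fun i => max (-x i) 0)) ^ p with hgn
  have hgpm : Measurable gp := by
    have h : Measurable (fun x : Fin d → ℝ => eucNorm d (fun i => max (x i) 0)) :=
      (eucNorm_measurable d).comp
        (measurable_pi_lambda _ fun i => (measurable_pi_apply i).max measurable_const)
    exact (by fun_prop : Measurable fun t : ℝ => t ^ p).comp h
  have hgnm : Measurable gn := by
    have h : Measurable (fun x : Fin d → ℝ => eucNorm d (fun i => max (-x i) 0)) :=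
      (eucNorm_measurable d).comp
        (measurable_pi_lambda _ fun i => ((measurable_pi_apply i).neg).max measurable_const)
    exact (by fun_prop : Measurable fun t : ℝ => t ^ p).comp h
  have hgp0 : ∀ x, 0 ≤ gp x := fun x => Real.rpow_nonneg (eucNorm_nonneg _ _) _
  have hgn0 : ∀ x, 0 ≤ gn x := fun x => Real.rpow_nonneg (eucNorm_nonneg _ _) _
  -- monotonicity of truncations
  have hpmono : ∀ n : ℕ, Monotone (fun x => min (gp x) n) := by
    intro n x y hxy
    apply min_le_min _ le_rfl
    apply Real.rpow_le_rpow (eucNorm_nonneg _ _) _ (by linarith)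
    apply Real.sqrt_le_sqrt
    apply Finset.sum_le_sum
    intro i _
    have h0 : (0:ℝ) ≤ max (x i) 0 := le_max_right _ _
    have : max (x i) 0 ≤ max (y i) 0 := max_le_max (hxy i) le_rfl
    nlinarith
  have hnanti : ∀ n : ℕ, Monotone (fun x => -min (gn x) n) := by
    intro n x y hxy
    apply neg_le_neg
    apply min_le_min _ le_rfl
    apply Real.rpow_le_rpow (eucNorm_nonneg _ _) _ (by linarith)
    apply Real.sqrt_le_sqrt
    apply Finset.sum_le_sum
    intro i _
    have h0 : (0:ℝ) ≤ max (-y i) 0 := le_max_right _ _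
    have : max (-y i) 0 ≤ max (-x i) 0 := max_le_max (neg_le_neg (hxy i)) le_rfl
    nlinarith
  -- transfer: positive part moments under μ bounded by μ₂
  have key_pos : ∫⁻ x, ENNReal.ofReal (gp x) ∂μ ≤ ∫⁻ x, ENNReal.ofReal (gp x) ∂μ₂ := by
    apply key_lintegral_le μ μ₂ gp hgpm hgp0
    intro n
    apply hle₂ _ (hgpm.min measurable_const) ⟨n, fun x => ?_⟩ (hpmono n)
    rw [abs_of_nonneg (le_min (hgp0 x) (Nat.cast_nonneg n))]
    exact min_le_right _ _
  have key_neg : ∫⁻ x, ENNReal.ofReal (gn x) ∂μ ≤ ∫⁻ x, ENNReal.ofReal (gn x) ∂μ₁ := by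
    apply key_lintegral_le μ μ₁ gn hgnm hgn0
    intro n
    have := hle₁ _ ((hgnm.min measurable_const).neg) ⟨n, fun x => ?_⟩ (hnanti n)
    · simp only [Pi.neg_apply] at this
      rw [integral_neg, integral_neg] at this
      linarith
    · simp only [Pi.neg_apply]
      rw [abs_neg, abs_of_nonneg (le_min (hgn0 x) (Nat.cast_nonneg n))]
      exact min_le_right _ _
  -- part norms ≤ full norm
  have hple : ∀ x, gp x ≤ eucNorm d x ^ p := by
    intro x
    apply Real.rpow_le_rpow (eucNorm_nonneg _ _) _ (by linarith)
    exact eucNorm_part_le d x (fun t => max t 0) (fun t => by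
      rcases le_total t 0 with h | h <;> simp [max_def] <;> split_ifs <;> nlinarith)
  have hnle : ∀ x, gn x ≤ eucNorm d x ^ p := by
    intro x
    apply Real.rpow_le_rpow (eucNorm_nonneg _ _) _ (by linarith)
    exact eucNorm_part_le d x (fun t => max (-t) 0) (fun t => by
      rcases le_total t 0 with h | h <;> simp [max_def] <;> split_ifs <;> nlinarith)
  -- pointwise bound
  have hpt : ∀ x, ENNReal.ofReal (eucNorm d x ^ p) ≤
      ENNReal.ofReal ((2:ℝ)^p) * (ENNReal.ofReal (gp x) + ENNReal.ofReal (gn x)) := by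
    intro x
    have h1 : eucNorm d x ^ p ≤ 2^p * (gp x + gn x) := by
      calc eucNorm d x ^ p
          ≤ (eucNorm d (fun i => max (x i) 0) + eucNorm d (fun i => max (-x i) 0)) ^ p :=
            Real.rpow_le_rpow (eucNorm_nonneg _ _) (eucNorm_split d x) (by linarith)
        _ ≤ 2^p * (gp x + gn x) :=
            two_pow_bound _ _ p (eucNorm_nonneg _ _) (eucNorm_nonneg _ _) hp
    calc ENNReal.ofReal (eucNorm d x ^ p) ≤ ENNReal.ofReal (2^p * (gp x + gn x)) :=
          ENNReal.ofReal_le_ofReal h1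
      _ = ENNReal.ofReal ((2:ℝ)^p) * (ENNReal.ofReal (gp x) + ENNReal.ofReal (gn x)) := by
          rw [ENNReal.ofReal_mul (Real.rpow_nonneg (by norm_num) p),
            ENNReal.ofReal_add (hgp0 x) (hgn0 x)]
  calc ∫⁻ x, ENNReal.ofReal (eucNorm d x ^ p) ∂μ
      ≤ ∫⁻ x, ENNReal.ofReal ((2:ℝ)^p) * (ENNReal.ofReal (gp x) + ENNReal.ofReal (gn x)) ∂μ :=
        lintegral_mono hpt
    _ = ENNReal.ofReal ((2:ℝ)^p) *
        (∫⁻ x, ENNReal.ofReal (gp x) ∂μ + ∫⁻ x, ENNReal.ofReal (gn x) ∂μ) := by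
        rw [lintegral_const_mul _ (by exact (hgpm.ennreal_ofReal).add (hgnm.ennreal_ofReal)),
          lintegral_add_left hgpm.ennreal_ofReal]
    _ ≤ ENNReal.ofReal ((2:ℝ)^p) *
        (∫⁻ x, ENNReal.ofReal (eucNorm d x ^ p) ∂μ₁ +
         ∫⁻ x, ENNReal.ofReal (eucNorm d x ^ p) ∂μ₂) := by
        apply mul_le_mul_right 
        rw [add_comm (∫⁻ x, ENNReal.ofReal (gp x) ∂μ)]
        apply add_le_add
        · exact key_neg.trans (lintegral_mono fun x => ENNReal.ofReal_le_ofReal (hnle x))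
        · exact key_pos.trans (lintegral_mono fun x => ENNReal.ofReal_le_ofReal (hple x))
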